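/- Let f : [0,∞) × [0,1] → ℝ be continuous with continuous partial derivative ∂f/∂t. Suppose u₁ and u₂ both map [0,∞) × [0,1] to ℝ, have continuous partial derivatives ∂u/∂t and ∂²u/∂t², satisfy ∂²u/∂t²(t,x) − 3 ∫₀¹ x s ∂²u/∂t²(t,s) ds = ∂u/∂t(t,x) + f(t,x) for all t ≥ 0 and x ∈ [0,1], and satisfy the conditions u(0,x) = 0 and ∂u/∂t(0,x) − 3x ∫₀¹ s ∂u/∂t(0,s) ds = 0 for all x ∈ [0,1]. Then u₁ = u₂. -/

import Mathlib

open Set MeasureTheory intervalIntegral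

lemma ex3_sliceT {F : ℝ → ℝ → ℝ}
    (hF : ContinuousOn (fun p : ℝ × ℝ => F p.1 p.2) (Set.Ici 0 ×ˢ Set.Icc 0 1))
    {x : ℝ} (hx : x ∈ Set.Icc (0:ℝ) 1) :
    ContinuousOn (fun t => F t x) (Set.Ici 0) := by
  have : (fun t => F t x) = (fun p : ℝ × ℝ => F p.1 p.2) ∘ (fun t => (t, x)) := rfl
  rw [this]
  exact hF.comp ((continuous_id.prodMk continuous_const).continuousOn)
    (fun t ht => ⟨ht, hx⟩)

lemma ex3_sliceX {F : ℝ → ℝ → ℝ}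
    (hF : ContinuousOn (fun p : ℝ × ℝ => F p.1 p.2) (Set.Ici 0 ×ˢ Set.Icc 0 1))
    {t : ℝ} (ht : t ∈ Set.Ici (0:ℝ)) :
    ContinuousOn (fun s => F t s) (Set.Icc 0 1) := by
  have : (fun s => F t s) = (fun p : ℝ × ℝ => F p.1 p.2) ∘ (fun s => (t, s)) := rfl
  rw [this]
  exact hF.comp ((continuous_const.prodMk continuous_id).continuousOn)
    (fun s hs => ⟨ht, hs⟩)

lemma ex3_ii {f : ℝ → ℝ} {c : ℝ} (hc : (0:ℝ) ≤ c) (hf : ContinuousOn f (Set.Icc 0 c)) :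
    IntervalIntegrable f MeasureTheory.volume 0 c :=
  (hf.mono (Set.uIcc_of_le hc).subset).intervalIntegrable

lemma ex3_homog (w a : ℝ → ℝ → ℝ)
    (hw : ∀ x ∈ Set.Icc (0:ℝ) 1, ∀ t ∈ Set.Ici (0:ℝ),
      HasDerivWithinAt (fun τ => w τ x) (a t x) (Set.Ici 0) t)
    (hwc : ContinuousOn (fun p : ℝ × ℝ => w p.1 p.2) (Set.Ici 0 ×ˢ Set.Icc 0 1))
    (hac : ContinuousOn (fun p : ℝ × ℝ => a p.1 p.2) (Set.Ici 0 ×ˢ Set.Icc 0 1))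
    (heq : ∀ t ∈ Set.Ici (0:ℝ), ∀ x ∈ Set.Icc (0:ℝ) 1,
      a t x - 3 * x * ∫ s in (0:ℝ)..1, s * a t s = w t x)
    (hinit : ∀ x ∈ Set.Icc (0:ℝ) 1,
      w 0 x - 3 * x * ∫ s in (0:ℝ)..1, s * w 0 s = 0) :
    ∀ t ∈ Set.Ici (0:ℝ), ∀ x ∈ Set.Icc (0:ℝ) 1, w t x = 0 := by
  have h01 : (0:ℝ) ≤ 1 := zero_le_one
  have huIcc : Set.uIcc (0:ℝ) 1 = Set.Icc 0 1 := Set.uIcc_of_le h01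
  -- integrability of slices in s
  have hIa : ∀ t ∈ Set.Ici (0:ℝ), IntervalIntegrable (fun s => s * a t s) volume 0 1 := by
    intro t ht
    exact ex3_ii h01 (continuousOn_id.mul (ex3_sliceX hac ht))
  have hIw : ∀ t ∈ Set.Ici (0:ℝ), IntervalIntegrable (fun s => s * w t s) volume 0 1 := by
    intro t ht
    exact ex3_ii h01 (continuousOn_id.mul (ex3_sliceX hwc ht))
  -- Step B : ∫ s w t s = 0
  have hB : ∀ t ∈ Set.Ici (0:ℝ), (∫ s in (0:ℝ)..1, s * w t s) = 0 := by
    intro t ht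
    have hcongr : Set.EqOn (fun s => s * w t s)
        (fun s => s * a t s - (3 * ∫ r in (0:ℝ)..1, r * a t r) * s ^ 2) (Set.uIcc 0 1) := by
      intro s hs
      rw [huIcc] at hs
      have h := heq t ht s hs
      simp only
      linear_combination (-s) * h
    rw [intervalIntegral.integral_congr hcongr,
      intervalIntegral.integral_sub (g := fun s : ℝ => (3 * ∫ r in (0:ℝ)..1, r * a t r) * s ^ 2) (hIa t ht)
        ((continuous_const.mul (continuous_pow 2)).intervalIntegrable 0 1),
      intervalIntegral.integral_const_mul, integral_pow]
    ring
  -- Step FTC : w t x - w 0 x = ∫ τ in 0..t, a τ x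
  have hFTC : ∀ x ∈ Set.Icc (0:ℝ) 1, ∀ t ∈ Set.Ici (0:ℝ),
      (∫ τ in (0:ℝ)..t, a τ x) = w t x - w 0 x := by
    intro x hx t ht
    refine intervalIntegral.integral_eq_sub_of_hasDeriv_right_of_le ht
      ((ex3_sliceT hwc hx).mono (Set.Icc_subset_Ici_self)) (fun τ hτ => ?_) ?_
    · exact (hw x hx τ hτ.1.le).mono (fun y hy => (hτ.1.trans hy).le)
    · exact ex3_ii ht ((ex3_sliceT hac hx).mono Set.Icc_subset_Ici_self)
  -- Fubini : ∫ s, s * ∫ τ a = ∫ τ, ∫ s, s * a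
  have hFub : ∀ t ∈ Set.Ici (0:ℝ),
      (∫ s in (0:ℝ)..1, s * ∫ τ in (0:ℝ)..t, a τ s)
        = ∫ τ in (0:ℝ)..t, ∫ s in (0:ℝ)..1, s * a τ s := by
    intro t ht
    have hcont : ContinuousOn (fun p : ℝ × ℝ => p.2 * a p.1 p.2)
        (Set.Icc 0 t ×ˢ Set.Icc 0 1) :=
      (continuous_snd.continuousOn).mul
        (hac.mono (Set.prod_mono Set.Icc_subset_Ici_self (subset_refl _)))
    have hint : IntegrableOn (fun p : ℝ × ℝ => p.2 * a p.1 p.2)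
        (Set.Ioc 0 t ×ˢ Set.Ioc 0 1) volume :=
      (hcont.integrableOn_compact (isCompact_Icc.prod isCompact_Icc)).mono_set
        (Set.prod_mono Set.Ioc_subset_Icc_self Set.Ioc_subset_Icc_self)
    have hint' : Integrable (Function.uncurry (fun τ s => s * a τ s))
        ((volume.restrict (Set.Ioc 0 t)).prod (volume.restrict (Set.Ioc 0 1))) := by
      rw [Measure.prod_restrict]
      exact hint
    calc (∫ s in (0:ℝ)..1, s * ∫ τ in (0:ℝ)..t, a τ s)
        = ∫ s in Set.Ioc (0:ℝ) 1, ∫ τ in Set.Ioc (0:ℝ) t, s * a τ s := by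
          rw [intervalIntegral.integral_of_le h01]
          refine setIntegral_congr_fun measurableSet_Ioc (fun s _ => ?_)
          rw [intervalIntegral.integral_of_le ht, ← MeasureTheory.integral_const_mul]
      _ = ∫ τ in Set.Ioc (0:ℝ) t, ∫ s in Set.Ioc (0:ℝ) 1, s * a τ s :=
          MeasureTheory.integral_integral_swap hint'.swap
      _ = ∫ τ in (0:ℝ)..t, ∫ s in (0:ℝ)..1, s * a τ s := by
          rw [intervalIntegral.integral_of_le ht]
          refine setIntegral_congr_fun measurableSet_Ioc (fun τ _ => ?_)
          rw [intervalIntegral.integral_of_le h01]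
  -- Step J : ∫ τ in 0..t, (∫ s, s * a τ s) = 0
  have hJ : ∀ t ∈ Set.Ici (0:ℝ),
      (∫ τ in (0:ℝ)..t, ∫ s in (0:ℝ)..1, s * a τ s) = 0 := by
    intro t ht
    rw [← hFub t ht]
    have hcongr : Set.EqOn (fun s => s * ∫ τ in (0:ℝ)..t, a τ s)
        (fun s => s * w t s - s * w 0 s) (Set.uIcc 0 1) := by
      intro s hs
      rw [huIcc] at hs
      simp only
      rw [hFTC s hs t ht]
      ring
    rw [intervalIntegral.integral_congr hcongr,
      intervalIntegral.integral_sub (hIw t ht) (hIw 0 Set.self_mem_Ici),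
      hB t ht, hB 0 Set.self_mem_Ici, sub_zero]
  -- w 0 x = 0
  have hw0 : ∀ x ∈ Set.Icc (0:ℝ) 1, w 0 x = 0 := by
    intro x hx
    have := hinit x hx
    rw [hB 0 Set.self_mem_Ici] at this
    linarith
  -- Step W : w t x = ∫ τ in 0..t, w τ x
  have hW : ∀ t ∈ Set.Ici (0:ℝ), ∀ x ∈ Set.Icc (0:ℝ) 1,
      w t x = ∫ τ in (0:ℝ)..t, w τ x := by
    intro t ht x hx
    have hIwx : IntervalIntegrable (fun τ => w τ x) volume 0 t :=
      ex3_ii ht ((ex3_sliceT hwc hx).mono Set.Icc_subset_Ici_self)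
    have hIax : IntervalIntegrable (fun τ => a τ x) volume 0 t :=
      ex3_ii ht ((ex3_sliceT hac hx).mono Set.Icc_subset_Ici_self)
    have hsplit : (∫ τ in (0:ℝ)..t, a τ x)
        = (∫ τ in (0:ℝ)..t, w τ x) + ∫ τ in (0:ℝ)..t, (a τ x - w τ x) := by
      rw [← intervalIntegral.integral_add hIwx (hIax.sub hIwx)]
      simp
    have hrest : (∫ τ in (0:ℝ)..t, (a τ x - w τ x)) = 0 := by
      have hcongr : Set.EqOn (fun τ => a τ x - w τ x)
          (fun τ => (3 * x) * ∫ s in (0:ℝ)..1, s * a τ s) (Set.uIcc 0 t) := by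
        intro τ hτ
        rw [Set.uIcc_of_le ht] at hτ
        have := heq τ hτ.1 x hx
        simp only
        nlinarith [this]
      rw [intervalIntegral.integral_congr hcongr, intervalIntegral.integral_const_mul,
        hJ t ht, mul_zero]
    have := hFTC x hx t ht
    rw [hsplit, hrest, add_zero, hw0 x hx, sub_zero] at this
    exact this.symm
  -- Gronwall via exponential trick
  intro T hT x hx
  set g : ℝ → ℝ := fun t => ∫ τ in (0:ℝ)..t, w τ x with hg
  have hwcx : ContinuousOn (fun τ => w τ x) (Set.Ici 0) := ex3_sliceT hwc hx
  have hIwx : ∀ t ∈ Set.Ici (0:ℝ), IntervalIntegrable (fun τ => w τ x) volume 0 t := by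
    intro t ht
    exact ex3_ii ht (hwcx.mono Set.Icc_subset_Ici_self)
  have hgderiv : ∀ t ∈ Set.Ico (0:ℝ) T, HasDerivWithinAt g (w t x) (Set.Ici t) t := by
    intro t ht
    have hmeas : StronglyMeasurableAtFilter (fun τ => w τ x) (nhdsWithin t (Set.Ioi t)) volume := by
      refine ⟨Set.Ici 0, ?_, hwcx.aestronglyMeasurable measurableSet_Ici⟩
      exact Filter.mem_of_superset self_mem_nhdsWithin (fun y hy => (ht.1.trans hy.le))
    have hcw : ContinuousWithinAt (fun τ => w τ x) (Set.Ioi t) t :=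
      ((hwcx t ht.1).mono (fun y hy => ht.1.trans hy.le))
    exact intervalIntegral.integral_hasDerivWithinAt_right (hIwx t ht.1) hmeas hcw
  set h : ℝ → ℝ := fun t => Real.exp (-t) * g t with hh
  have hhderiv : ∀ t ∈ Set.Ico (0:ℝ) T, HasDerivWithinAt h 0 (Set.Ici t) t := by
    intro t ht
    have h1 : HasDerivWithinAt (fun t => Real.exp (-t)) (-Real.exp (-t)) (Set.Ici t) t := by
      have := (hasDerivAt_neg t).exp.hasDerivWithinAt (s := Set.Ici t)
      rw [mul_neg_one] at this
      exact this
    have h2 := (h1.mul (hgderiv t ht))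
    have hwg : w t x = g t := hW t ht.1 x hx
    show HasDerivWithinAt (fun t => Real.exp (-t) * g t) 0 (Set.Ici t) t
    refine h2.congr_deriv ?_
    rw [hwg]; ring
  have hgcont : ContinuousOn g (Set.Icc 0 T) := by
    have : ContinuousOn g (Set.Icc 0 T) := by
      have := intervalIntegral.continuousOn_primitive_interval
        (f := fun τ => w τ x) (μ := volume) (a := 0) (b := T)
        (((hwcx.mono Set.Icc_subset_Ici_self).mono (by rw [Set.uIcc_of_le hT])).integrableOn_compact
          (isCompact_uIcc))
      exact this.mono (by rw [Set.uIcc_of_le hT])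
    exact this
  have hhcont : ContinuousOn h (Set.Icc 0 T) :=
    ((Real.continuous_exp.comp continuous_neg).continuousOn).mul hgcont
  have hconst := constant_of_has_deriv_right_zero hhcont hhderiv T ⟨hT, le_rfl⟩
  have hg0 : g 0 = 0 := by simp [hg]
  have hgT : g T = 0 := by
    have : Real.exp (-T) * g T = Real.exp (-0) * g 0 := hconst
    rw [hg0, mul_zero] at this
    exact (mul_eq_zero.mp this).resolve_left (Real.exp_ne_zero _)
  rw [hW T hT x hx]
  exact hgT

/-- Uniqueness in Example 3: two solutions of
`∂²u/∂t²(t,x) − 3 ∫₀¹ x s ∂²u/∂t²(t,s) ds = ∂u/∂t(t,x) + f(t,x)` on `[0,∞) × [0,1]`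
satisfying the special initial conditions `u(0,x) = 0` and
`∂u/∂t(0,x) − 3x ∫₀¹ s ∂u/∂t(0,s) ds = 0` must coincide. -/
theorem stmt_11 (f ft u₁ ut₁ utt₁ u₂ ut₂ utt₂ : ℝ → ℝ → ℝ)
    (hf : ContinuousOn (fun p : ℝ × ℝ => f p.1 p.2) (Set.Ici 0 ×ˢ Set.Icc 0 1))
    (hft : ∀ x ∈ Set.Icc (0:ℝ) 1, ∀ t ∈ Set.Ici (0:ℝ),
      HasDerivWithinAt (fun τ => f τ x) (ft t x) (Set.Ici 0) t)
    (hftc : ContinuousOn (fun p : ℝ × ℝ => ft p.1 p.2) (Set.Ici 0 ×ˢ Set.Icc 0 1))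
    (hut₁ : ∀ x ∈ Set.Icc (0:ℝ) 1, ∀ t ∈ Set.Ici (0:ℝ),
      HasDerivWithinAt (fun τ => u₁ τ x) (ut₁ t x) (Set.Ici 0) t)
    (hutt₁ : ∀ x ∈ Set.Icc (0:ℝ) 1, ∀ t ∈ Set.Ici (0:ℝ),
      HasDerivWithinAt (fun τ => ut₁ τ x) (utt₁ t x) (Set.Ici 0) t)
    (hutc₁ : ContinuousOn (fun p : ℝ × ℝ => ut₁ p.1 p.2) (Set.Ici 0 ×ˢ Set.Icc 0 1))
    (huttc₁ : ContinuousOn (fun p : ℝ × ℝ => utt₁ p.1 p.2) (Set.Ici 0 ×ˢ Set.Icc 0 1))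
    (heq₁ : ∀ t ∈ Set.Ici (0:ℝ), ∀ x ∈ Set.Icc (0:ℝ) 1,
      utt₁ t x - 3 * x * ∫ s in (0:ℝ)..1, s * utt₁ t s = ut₁ t x + f t x)
    (hzero₁ : ∀ x ∈ Set.Icc (0:ℝ) 1, u₁ 0 x = 0)
    (hinit₁ : ∀ x ∈ Set.Icc (0:ℝ) 1,
      ut₁ 0 x - 3 * x * ∫ s in (0:ℝ)..1, s * ut₁ 0 s = 0)
    (hut₂ : ∀ x ∈ Set.Icc (0:ℝ) 1, ∀ t ∈ Set.Ici (0:ℝ),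
      HasDerivWithinAt (fun τ => u₂ τ x) (ut₂ t x) (Set.Ici 0) t)
    (hutt₂ : ∀ x ∈ Set.Icc (0:ℝ) 1, ∀ t ∈ Set.Ici (0:ℝ),
      HasDerivWithinAt (fun τ => ut₂ τ x) (utt₂ t x) (Set.Ici 0) t)
    (hutc₂ : ContinuousOn (fun p : ℝ × ℝ => ut₂ p.1 p.2) (Set.Ici 0 ×ˢ Set.Icc 0 1))
    (huttc₂ : ContinuousOn (fun p : ℝ × ℝ => utt₂ p.1 p.2) (Set.Ici 0 ×ˢ Set.Icc 0 1))
    (heq₂ : ∀ t ∈ Set.Ici (0:ℝ), ∀ x ∈ Set.Icc (0:ℝ) 1,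
      utt₂ t x - 3 * x * ∫ s in (0:ℝ)..1, s * utt₂ t s = ut₂ t x + f t x)
    (hzero₂ : ∀ x ∈ Set.Icc (0:ℝ) 1, u₂ 0 x = 0)
    (hinit₂ : ∀ x ∈ Set.Icc (0:ℝ) 1,
      ut₂ 0 x - 3 * x * ∫ s in (0:ℝ)..1, s * ut₂ 0 s = 0) :
    ∀ t ∈ Set.Ici (0:ℝ), ∀ x ∈ Set.Icc (0:ℝ) 1, u₁ t x = u₂ t x := by
  set w : ℝ → ℝ → ℝ := fun t x => ut₁ t x - ut₂ t x with hwdef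
  set a : ℝ → ℝ → ℝ := fun t x => utt₁ t x - utt₂ t x with hadef
  have h01 : (0:ℝ) ≤ 1 := zero_le_one
  have hIutt₁ : ∀ t ∈ Set.Ici (0:ℝ), IntervalIntegrable (fun s => s * utt₁ t s) volume 0 1 :=
    fun t ht => ex3_ii h01 (continuousOn_id.mul (ex3_sliceX huttc₁ ht))
  have hIutt₂ : ∀ t ∈ Set.Ici (0:ℝ), IntervalIntegrable (fun s => s * utt₂ t s) volume 0 1 :=
    fun t ht => ex3_ii h01 (continuousOn_id.mul (ex3_sliceX huttc₂ ht))
  have hIut₁ : IntervalIntegrable (fun s => s * ut₁ 0 s) volume 0 1 :=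
    ex3_ii h01 (continuousOn_id.mul (ex3_sliceX hutc₁ Set.self_mem_Ici))
  have hIut₂ : IntervalIntegrable (fun s => s * ut₂ 0 s) volume 0 1 :=
    ex3_ii h01 (continuousOn_id.mul (ex3_sliceX hutc₂ Set.self_mem_Ici))
  have hwzero : ∀ t ∈ Set.Ici (0:ℝ), ∀ x ∈ Set.Icc (0:ℝ) 1, w t x = 0 := by
    apply ex3_homog w a
    · intro x hx t ht
      exact (hutt₁ x hx t ht).sub (hutt₂ x hx t ht)
    · exact hutc₁.sub hutc₂
    · exact huttc₁.sub huttc₂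
    · intro t ht x hx
      have e₁ := heq₁ t ht x hx
      have e₂ := heq₂ t ht x hx
      have hsub : (∫ s in (0:ℝ)..1, s * a t s)
          = (∫ s in (0:ℝ)..1, s * utt₁ t s) - ∫ s in (0:ℝ)..1, s * utt₂ t s := by
        rw [← intervalIntegral.integral_sub (hIutt₁ t ht) (hIutt₂ t ht)]
        apply intervalIntegral.integral_congr
        intro s _
        simp [hadef]
        ring
      simp only [hadef, hwdef]
      rw [hsub]
      ring_nf
      ring_nf at e₁ e₂
      linarith
    · intro x hx
      have e₁ := hinit₁ x hx
      have e₂ := hinit₂ x hx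
      have hsub : (∫ s in (0:ℝ)..1, s * w 0 s)
          = (∫ s in (0:ℝ)..1, s * ut₁ 0 s) - ∫ s in (0:ℝ)..1, s * ut₂ 0 s := by
        rw [← intervalIntegral.integral_sub hIut₁ hIut₂]
        apply intervalIntegral.integral_congr
        intro s _
        simp [hwdef]
        ring
      simp only [hwdef]
      rw [hsub]
      ring_nf
      ring_nf at e₁ e₂
      linarith
  intro t ht x hx
  have hFTC : (∫ τ in (0:ℝ)..t, w τ x) = (u₁ t x - u₂ t x) - (u₁ 0 x - u₂ 0 x) := by
    have hcont : ContinuousOn (fun τ => u₁ τ x - u₂ τ x) (Set.Icc 0 t) := fun τ hτ =>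
      (((hut₁ x hx τ hτ.1).sub (hut₂ x hx τ hτ.1)).continuousWithinAt).mono
        Set.Icc_subset_Ici_self
    have hderiv : ∀ τ ∈ Set.Ioo (0:ℝ) t,
        HasDerivWithinAt (fun τ => u₁ τ x - u₂ τ x) (w τ x) (Set.Ioi τ) τ := fun τ hτ =>
      (((hut₁ x hx τ hτ.1.le).sub (hut₂ x hx τ hτ.1.le)).mono
        (fun y hy => (hτ.1.trans hy).le))
    have hint : IntervalIntegrable (fun τ => w τ x) volume 0 t :=
      ex3_ii ht (((ex3_sliceT hutc₁ hx).sub (ex3_sliceT hutc₂ hx)).mono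
        Set.Icc_subset_Ici_self)
    exact intervalIntegral.integral_eq_sub_of_hasDeriv_right_of_le ht hcont hderiv hint
  have hInt0 : (∫ τ in (0:ℝ)..t, w τ x) = 0 := by
    have : Set.EqOn (fun τ => w τ x) (fun _ => (0:ℝ)) (Set.uIcc 0 t) := by
      intro τ hτ
      rw [Set.uIcc_of_le ht] at hτ
      exact hwzero τ hτ.1 x hx
    rw [intervalIntegral.integral_congr this]
    simp
  rw [hInt0] at hFTC
  have h₁ := hzero₁ x hx
  have h₂ := hzero₂ x hx
  linarith
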